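/- arXiv:1805.12486 — 4 statements merged into one kernel-verified Lean document; each statement's English description precedes it below -/
import Mathlib

section
/- Let 0 < α < 1, μ ∈ ℝ and c ≥ 0. Then there exists z₀ > 0 such that for every z ∈ ℝ with |z| > z₀: ∫₀^{z−μ} u / ((1+|u+μ|^{α})(1+|u+μ|^{α}+c)) du ≥ (1/(4(1−α))) · (|z−μ|^{2(1−α)} − |sgn(z)·z₀ − μ|^{2(1−α)}). -/
open MeasureTheory intervalIntegral Set

private lemma rpow_subadd {a b p : ℝ} (ha : 0 ≤ a) (hb : 0 ≤ b) (hp : 0 ≤ p) (hp1 : p ≤ 1) :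
    (a + b) ^ p ≤ a ^ p + b ^ p := by
  have h := NNReal.rpow_add_le_add_rpow a.toNNReal b.toNNReal hp hp1
  have h2 := NNReal.coe_le_coe.mpr h
  push_cast at h2
  rwa [Real.coe_toNNReal a ha, Real.coe_toNNReal b hb] at h2

private lemma core_ineq (α : ℝ) (hα0 : 0 < α) (hα1 : α < 1) (μ c : ℝ) (hc : 0 ≤ c)
    (z₀ : ℝ) (hz₀ : |μ| < z₀)
    (hbound : ∀ u : ℝ, z₀ - |μ| ≤ u →
      (1 + |u + μ| ^ α) * (1 + |u + μ| ^ α + c) ≤ 2 * u ^ (2 * α)) :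
    ∀ Z : ℝ, z₀ - μ < Z →
      (1 / (4 * (1 - α))) * (Z ^ (2 * (1 - α)) - (z₀ - μ) ^ (2 * (1 - α))) ≤
        ∫ u in (0:ℝ)..Z, u / ((1 + |u + μ| ^ α) * (1 + |u + μ| ^ α + c)) := by
  intro Z hZ
  have hμ : μ ≤ |μ| := le_abs_self μ
  set A : ℝ := z₀ - μ with hA
  have hA0 : 0 < A := by rw [hA]; linarith
  have hAz : z₀ - |μ| ≤ A := by rw [hA]; linarith
  set D : ℝ → ℝ := fun u => (1 + |u + μ| ^ α) * (1 + |u + μ| ^ α + c) with hD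
  have hDpos : ∀ u, 0 < D u := by
    intro u
    have h1 : (0:ℝ) ≤ |u + μ| ^ α := Real.rpow_nonneg (abs_nonneg _) _
    have h2 : (0:ℝ) < 1 + |u + μ| ^ α := by linarith
    exact mul_pos h2 (by linarith)
  have hcont : Continuous fun u : ℝ => u / D u := by
    have habs : Continuous fun u : ℝ => |u + μ| ^ α := by
      apply Continuous.rpow_const (by continuity)
      intro x; exact Or.inr hα0.le
    have hDc : Continuous D :=
      (continuous_const.add habs).mul ((continuous_const.add habs).add continuous_const)
    exact continuous_id.div hDc fun u => (hDpos u).ne'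
  have hint : ∀ a b : ℝ, IntervalIntegrable (fun u => u / D u) volume a b :=
    fun a b => hcont.intervalIntegrable a b
  have hsplit : (∫ u in (0:ℝ)..Z, u / D u)
      = (∫ u in (0:ℝ)..A, u / D u) + ∫ u in A..Z, u / D u :=
    (integral_add_adjacent_intervals (hint 0 A) (hint A Z)).symm
  have h1 : 0 ≤ ∫ u in (0:ℝ)..A, u / D u := by
    apply intervalIntegral.integral_nonneg hA0.le
    intro u hu
    exact div_nonneg hu.1 (hDpos u).le
  have hglb : ∀ u ∈ Icc A Z, (1/2) * u ^ (1 - 2*α) ≤ u / D u := by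
    intro u hu
    have hu0 : 0 < u := lt_of_lt_of_le hA0 hu.1
    have hb := hbound u (le_trans hAz hu.1)
    have h2u : 0 < 2 * u ^ (2*α) := by positivity
    have hdiv : u / (2 * u ^ (2*α)) ≤ u / D u := by
      gcongr
    have heq : (1/2) * u ^ (1 - 2*α) = u / (2 * u ^ (2*α)) := by
      rw [show (1 - 2*α) = 1 + -(2*α) by ring, Real.rpow_add hu0, Real.rpow_one,
        Real.rpow_neg hu0.le]
      have hne : u ^ (2*α) ≠ 0 := by positivity
      field_simp
    rw [heq]; exact hdiv
  have hint2 : IntervalIntegrable (fun u : ℝ => (1/2) * u ^ (1 - 2*α)) volume A Z :=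
    (intervalIntegral.intervalIntegrable_rpow' (by linarith)).const_mul _
  have hmono : (∫ u in A..Z, (1/2) * u ^ (1 - 2*α)) ≤ ∫ u in A..Z, u / D u :=
    intervalIntegral.integral_mono_on hZ.le hint2 (hint A Z) hglb
  have hval : (∫ u in A..Z, (1/2) * u ^ (1 - 2*α))
      = (1 / (4 * (1 - α))) * (Z ^ (2*(1-α)) - A ^ (2*(1-α))) := by
    rw [intervalIntegral.integral_const_mul, integral_rpow (Or.inl (by linarith))]
    rw [show (1 - 2*α) + 1 = 2*(1-α) by ring]
    have h1α : ((1:ℝ) - α) ≠ 0 := by intro h; linarith [h.ge, h.le]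
    generalize Z ^ (2*(1-α)) = P
    generalize A ^ (2*(1-α)) = Q
    simp only [div_eq_mul_inv, mul_inv]
    ring
  linarith [hsplit, h1, hmono, hval]

/-- The key integral inequality (5.2) from the proof of Corollary 4.1. -/
theorem stmt_3 (α : ℝ) (hα0 : 0 < α) (hα1 : α < 1) (μ c : ℝ) (hc : 0 ≤ c) :
    ∃ z₀ > (0:ℝ), ∀ z : ℝ, z₀ < |z| →
      (1 / (4 * (1 - α))) *
          (|z - μ| ^ (2 * (1 - α)) - |Real.sign z * z₀ - μ| ^ (2 * (1 - α))) ≤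
        ∫ u in (0:ℝ)..(z - μ), u / ((1 + |u + μ| ^ α) * (1 + |u + μ| ^ α + c)) := by
  set m : ℝ := |μ| with hm
  have hm0 : 0 ≤ m := abs_nonneg μ
  set K : ℝ := 1 + c + m ^ α with hKdef
  have hmα : 0 ≤ m ^ α := Real.rpow_nonneg hm0 _
  have hK1 : (1:ℝ) ≤ K := by rw [hKdef]; linarith
  have hK0 : (0:ℝ) < 3 * K := by linarith
  set A₀ : ℝ := max 1 ((3*K) ^ (α⁻¹)) with hA₀def
  have hA₀1 : (1:ℝ) ≤ A₀ := le_max_left _ _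
  set z₀ : ℝ := A₀ + m with hz₀def
  have hz₀m : m < z₀ := by rw [hz₀def]; linarith
  have hz₀pos : 0 < z₀ := lt_of_le_of_lt hm0 hz₀m
  -- the key pointwise denominator bound, valid for any ν with |ν| = m
  have hbound : ∀ ν : ℝ, |ν| ≤ m → ∀ u : ℝ, z₀ - m ≤ u →
      (1 + |u + ν| ^ α) * (1 + |u + ν| ^ α + c) ≤ 2 * u ^ (2 * α) := by
    intro ν hν u hu
    have huA : A₀ ≤ u := by rw [hz₀def] at hu; linarith
    have hu1 : (1:ℝ) ≤ u := le_trans hA₀1 huA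
    have hu0 : (0:ℝ) < u := by linarith
    have ht3 : 3 * K ≤ u ^ α := by
      have h1 : (3*K) ^ (α⁻¹) ≤ u := le_trans (le_max_right _ _) huA
      have h2 : ((3*K) ^ (α⁻¹)) ^ α ≤ u ^ α :=
        Real.rpow_le_rpow (Real.rpow_nonneg hK0.le _) h1 hα0.le
      rwa [← Real.rpow_mul hK0.le, inv_mul_cancel₀ hα0.ne', Real.rpow_one] at h2
    have habs : |u + ν| ≤ u + m := by
      calc |u + ν| ≤ |u| + |ν| := abs_add_le _ _
        _ ≤ u + m := by rw [abs_of_pos hu0]; linarith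
    have hsub : (u + m) ^ α ≤ u ^ α + m ^ α := rpow_subadd hu0.le hm0 hα0.le hα1.le
    have hpow : |u + ν| ^ α ≤ u ^ α + m ^ α :=
      le_trans (Real.rpow_le_rpow (abs_nonneg _) habs hα0.le) hsub
    set t : ℝ := u ^ α with htdef
    have ht0 : 0 ≤ t := Real.rpow_nonneg hu0.le _
    have habsnn : 0 ≤ |u + ν| ^ α := Real.rpow_nonneg (abs_nonneg _) _
    have hfac1 : 1 + |u + ν| ^ α ≤ t + K := by rw [hKdef]; linarith
    have hfac2 : 1 + |u + ν| ^ α + c ≤ t + K := by rw [hKdef]; linarith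
    have hsq : u ^ (2*α) = t * t := by
      rw [show 2*α = α + α by ring, Real.rpow_add hu0]
    have hmul : (1 + |u + ν| ^ α) * (1 + |u + ν| ^ α + c) ≤ (t + K) * (t + K) := by
      apply mul_le_mul hfac1 hfac2 (by linarith) (by linarith)
    have hfin : (t + K) * (t + K) ≤ 2 * (t * t) := by nlinarith [ht3, hK1, ht0]
    rw [hsq]; linarith
  refine ⟨z₀, hz₀pos, ?_⟩
  intro z hz
  rcases lt_or_gt_of_ne (fun h : z = 0 => by simp [h, abs_zero] at hz; linarith) with hzneg | hzpos
  · -- z < 0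
    have hz' : z₀ < -z := by rwa [abs_of_neg hzneg] at hz
    rw [Real.sign_of_neg hzneg]
    have hμ1 : μ ≤ m := le_abs_self μ
    have hμ2 : -m ≤ μ := neg_abs_le μ
    have hnμ : |-μ| = m := by rw [abs_neg]
    have hswap : (∫ u in (0:ℝ)..(z - μ), u / ((1 + |u + μ| ^ α) * (1 + |u + μ| ^ α + c)))
        = ∫ v in (0:ℝ)..(-z - -μ), v / ((1 + |v + -μ| ^ α) * (1 + |v + -μ| ^ α + c)) := by
      have h := intervalIntegral.integral_comp_neg (a := (0:ℝ)) (b := -z - -μ)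
        (fun u => u / ((1 + |u + μ| ^ α) * (1 + |u + μ| ^ α + c)))
      have he : ∀ x : ℝ, (-x) / ((1 + |(-x) + μ| ^ α) * (1 + |(-x) + μ| ^ α + c))
          = -(x / ((1 + |x + -μ| ^ α) * (1 + |x + -μ| ^ α + c))) := by
        intro x
        rw [show (-x) + μ = -(x + -μ) by ring, abs_neg, neg_div]
      simp only [he] at h
      rw [intervalIntegral.integral_neg] at h
      have h2 : -(-z - -μ) = z - μ := by ring
      rw [h2, neg_zero] at h
      have hsymm : (∫ x in (z - μ)..(0:ℝ),
            x / ((1 + |x + μ| ^ α) * (1 + |x + μ| ^ α + c)))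
          = -∫ x in (0:ℝ)..(z - μ), x / ((1 + |x + μ| ^ α) * (1 + |x + μ| ^ α + c)) :=
        intervalIntegral.integral_symm 0 (z - μ)
      rw [hsymm] at h
      linarith [h]
    rw [hswap]
    have hcore := core_ineq α hα0 hα1 (-μ) c hc z₀ (by rw [hnμ]; exact hz₀m)
      (by rw [hnμ]; exact hbound (-μ) (le_of_eq hnμ)) (-z - -μ) (by linarith)
    have e1 : |z - μ| = -z - -μ := by
      rw [abs_of_neg (by linarith : z - μ < 0)]
      ring
    have e2 : |-1 * z₀ - μ| = z₀ - -μ := by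
      rw [show (-1 : ℝ) * z₀ - μ = -(z₀ + μ) by ring, abs_neg,
        abs_of_pos (by linarith : (0:ℝ) < z₀ + μ)]
      ring
    rw [e1, e2]
    exact hcore
  · -- z > 0
    have hz' : z₀ < z := by rwa [abs_of_pos hzpos] at hz
    rw [Real.sign_of_pos hzpos, one_mul]
    have hμle : μ ≤ m := le_abs_self μ
    have e1 : |z - μ| = z - μ := abs_of_pos (by linarith)
    have e2 : |z₀ - μ| = z₀ - μ := abs_of_pos (by linarith)
    rw [e1, e2]
    exact core_ineq α hα0 hα1 μ c hc z₀ hz₀m (hbound μ (le_refl m)) (z - μ) (by linarith)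
end

section
/- Let a > 0, ι > 0, κ > 0, A, D ∈ ℝ, and let h : ℝ → ℝ be continuously differentiable with 0 < c ≤ h′(x) ≤ C for all x ∈ ℝ, for constants c, C. For t > 0 and suitable g : ℝ → ℝ define (P_t g)(x) := ∫_ℝ g(y) (2πt)^{−1/2} exp(−(x−y)²/(2t)) dy. Let G be a real random variable whose law is the centered Gaussian law on ℝ with variance ι, and set Y := κ·(P_a h)(A+G) + D. Then the law of Y is absolutely continuous with respect to Lebesgue measure with a density p satisfying, for almost every x ∈ ℝ: (E|Y−E Y|/(2C²κ²ι)) · exp(−(x−E Y)²/(2c²κ²ι)) ≤ p(x) ≤ (E|Y−E Y|/(2c²κ²ι)) · exp(−(x−E Y)²/(2C²κ²ι)). -/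
open MeasureTheory ProbabilityTheory

/-- The Gaussian (heat) semigroup kernel applied to `g`:
`(P_t g)(x) = ∫ g(y) (2πt)^{-1/2} exp(-(x-y)²/(2t)) dy`. -/
noncomputable def heatP (t : ℝ) (g : ℝ → ℝ) (x : ℝ) : ℝ :=
  ∫ y : ℝ, g y * ((2 * Real.pi * t) ^ (-(1:ℝ) / 2) * Real.exp (-(x - y) ^ 2 / (2 * t)))

open MeasureTheory ProbabilityTheory Real Filter Set Topology
open scoped NNReal ENNReal

namespace Stmt6

lemma gauss_pdf_eq {v : ℝ} (hv : 0 < v) (x : ℝ) :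
    gaussianPDFReal 0 ⟨v, hv.le⟩ x = (√(2 * π * v))⁻¹ * rexp (-(2*v)⁻¹ * x ^ 2) := by
  simp [gaussianPDFReal, neg_div, div_eq_inv_mul, neg_mul]
  rfl

lemma gauss_pdf_pos {v : ℝ} (hv : 0 < v) (x : ℝ) : 0 < gaussianPDFReal 0 ⟨v, hv.le⟩ x :=
  gaussianPDFReal_pos _ _ _ (fun h0 => hv.ne' (congrArg NNReal.toReal h0))

lemma continuous_gauss_pdf {v : ℝ} (hv : 0 < v) :
    Continuous (gaussianPDFReal 0 ⟨v, hv.le⟩) := by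
  unfold gaussianPDFReal
  fun_prop

lemma integrable_lip_mul_gauss {v : ℝ} (hv : 0 < v) {L : ℝ≥0} {F : ℝ → ℝ}
    (hF : LipschitzWith L F) :
    Integrable (fun u => F u * gaussianPDFReal 0 ⟨v, hv.le⟩ u) := by
  have hb : (0:ℝ) < (2*v)⁻¹ := by positivity
  have hint : Integrable (fun u : ℝ =>
      (√(2 * π * v))⁻¹ * ((|F 0| + L) * rexp (-(2*v)⁻¹ * u ^ 2)
        + L * (u ^ 2 * rexp (-(2*v)⁻¹ * u ^ 2)))) := by
    have i1 : Integrable (fun u : ℝ => rexp (-(2*v)⁻¹ * u ^ 2)) := integrable_exp_neg_mul_sq hb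
    have i2 : Integrable (fun u : ℝ => u ^ 2 * rexp (-(2*v)⁻¹ * u ^ 2)) := by
      have := integrable_rpow_mul_exp_neg_mul_sq hb (s := 2) (by norm_num)
      simpa [Real.rpow_two] using this
    exact ((i1.const_mul _).add (i2.const_mul _)).const_mul _
  refine hint.mono' ((hF.continuous.mul (continuous_gauss_pdf hv)).aestronglyMeasurable) ?_
  refine ae_of_all _ fun u => ?_
  have h1 : |F u| ≤ |F 0| + L * |u| := by
    have := hF.dist_le_mul u 0
    simp only [Real.dist_eq, sub_zero] at this
    calc |F u| ≤ |F 0| + |F u - F 0| := by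
          have := abs_sub_abs_le_abs_sub (F u) (F 0); linarith
    _ ≤ |F 0| + L * |u| := by linarith
  have h2 : |u| ≤ 1 + u ^ 2 := by nlinarith [sq_nonneg (|u| - 1), sq_abs u]
  have hφ := gauss_pdf_eq hv u
  have hφ_nonneg : 0 ≤ gaussianPDFReal 0 ⟨v, hv.le⟩ u := gaussianPDFReal_nonneg _ _ _
  have hexp : 0 < rexp (-(2*v)⁻¹ * u ^ 2) := exp_pos _
  have hc0 : 0 ≤ (√(2 * π * v))⁻¹ := by positivity
  rw [Real.norm_eq_abs, abs_mul, abs_of_nonneg hφ_nonneg, hφ]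
  have : |F u| ≤ (|F 0| + L) + L * u ^ 2 := by
    have : (L : ℝ) * |u| ≤ L * (1 + u ^ 2) := by
      exact mul_le_mul_of_nonneg_left h2 L.coe_nonneg
    nlinarith [L.coe_nonneg]
  calc |F u| * ((√(2 * π * v))⁻¹ * rexp (-(2*v)⁻¹ * u ^ 2))
      ≤ ((|F 0| + L) + L * u ^ 2) * ((√(2 * π * v))⁻¹ * rexp (-(2*v)⁻¹ * u ^ 2)) := by
        apply mul_le_mul_of_nonneg_right this (by positivity)
    _ = (√(2 * π * v))⁻¹ * ((|F 0| + L) * rexp (-(2*v)⁻¹ * u ^ 2)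
        + L * (u ^ 2 * rexp (-(2*v)⁻¹ * u ^ 2))) := by ring


lemma heatP_eq {a : ℝ} (ha : 0 < a) (g : ℝ → ℝ) (x : ℝ) :
    heatP a g x = ∫ u, g (x - u) * gaussianPDFReal 0 ⟨a, ha.le⟩ u := by
  have hker : ∀ y : ℝ, (2 * π * a) ^ (-(1:ℝ) / 2) * rexp (-(x - y) ^ 2 / (2 * a))
      = gaussianPDFReal 0 ⟨a, ha.le⟩ (x - y) := by
    intro y
    have h2πa : (0:ℝ) ≤ 2 * π * a := by positivity
    unfold gaussianPDFReal
    rw [show (-(1:ℝ)/2) = -(1/2 : ℝ) by norm_num, Real.rpow_neg h2πa, ← Real.sqrt_eq_rpow]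
    norm_num
    rfl
  unfold heatP
  simp_rw [hker]
  set J : ℝ → ℝ := fun u => g (x - u) * gaussianPDFReal 0 ⟨a, ha.le⟩ u with hJ
  have hJy : ∀ y : ℝ, g y * gaussianPDFReal 0 ⟨a, ha.le⟩ (x - y) = J (x - y) := by
    intro y; simp [hJ]
  simp_rw [hJy]
  have e1 : (∫ y, J (x - y)) = ∫ y, J (x + y) := by
    have := integral_neg_eq_self (fun y => J (x + y)) (volume : Measure ℝ)
    simpa [sub_eq_add_neg] using this
  rw [e1, integral_add_left_eq_self J x]

lemma lip_one_sub (x : ℝ) : LipschitzWith 1 (fun u : ℝ => x - u) := by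
  refine LipschitzWith.of_dist_le_mul fun u v => ?_
  simp only [Real.dist_eq, NNReal.coe_one, one_mul]
  rw [show x - u - (x - v) = -(u - v) by ring, abs_neg]

lemma hasDerivAt_heatP {a : ℝ} (ha : 0 < a) {h : ℝ → ℝ} (hh : ContDiff ℝ 1 h)
    {c C : ℝ} (hc : 0 < c) (hder : ∀ x : ℝ, c ≤ deriv h x ∧ deriv h x ≤ C) (x : ℝ) :
    HasDerivAt (heatP a h) (∫ u, deriv h (x - u) * gaussianPDFReal 0 ⟨a, ha.le⟩ u) x := by
  have hC : 0 < C := lt_of_lt_of_le hc (le_trans (hder 0).1 (hder 0).2)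
  have hdiff : Differentiable ℝ h := hh.differentiable one_ne_zero
  have habs : ∀ z : ℝ, |deriv h z| ≤ C := fun z =>
    abs_le.2 ⟨by linarith [(hder z).1], (hder z).2⟩
  have hlip : LipschitzWith ⟨C, hC.le⟩ h := by
    refine lipschitzWith_of_nnnorm_deriv_le hdiff fun z => ?_
    apply NNReal.coe_le_coe.1
    simp only [coe_nnnorm, Real.norm_eq_abs]
    exact habs z
  set K : ℝ → ℝ := gaussianPDFReal 0 ⟨a, ha.le⟩ with hK
  have hK_nonneg : ∀ u, 0 ≤ K u := fun u => gaussianPDFReal_nonneg _ _ _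
  have hK_cont : Continuous K := continuous_gauss_pdf ha
  have hK_int : Integrable K := integrable_gaussianPDFReal _ _
  have key := hasDerivAt_integral_of_dominated_loc_of_deriv_le (μ := volume)
      (F := fun y u => h (y - u) * K u) (F' := fun y u => deriv h (y - u) * K u)
      (x₀ := x) (s := Metric.ball x 1) (bound := fun u => C * K u) (Metric.ball_mem_nhds x one_pos)
      (Filter.Eventually.of_forall fun y =>
        ((hdiff.continuous.comp (continuous_const.sub continuous_id)).mul
          hK_cont).aestronglyMeasurable)
      (integrable_lip_mul_gauss ha (hlip.comp (lip_one_sub x)))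
      (((hh.continuous_deriv le_rfl).comp (continuous_const.sub continuous_id)).mul
          hK_cont).aestronglyMeasurable
      (ae_of_all _ fun u y _ => by
        rw [Real.norm_eq_abs, abs_mul, abs_of_nonneg (hK_nonneg u)]
        exact mul_le_mul_of_nonneg_right (habs _) (hK_nonneg u))
      (hK_int.const_mul C)
      (ae_of_all _ fun u y _ => by
        have h1 : HasDerivAt (fun y : ℝ => y - u) 1 y := (hasDerivAt_id y).sub_const u
        have h2 : HasDerivAt (fun y : ℝ => h (y - u)) (deriv h (y - u) * 1) y :=
          ((hdiff (y - u)).hasDerivAt).comp y h1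
        simpa using h2.mul_const (K u))
  have heq : heatP a h = fun y => ∫ u, h (y - u) * K u := funext fun y => heatP_eq ha h y
  rw [heq]
  exact key.2

lemma heat_deriv_integrable {a : ℝ} (ha : 0 < a) {h : ℝ → ℝ} (hh : ContDiff ℝ 1 h)
    {c C : ℝ} (hc : 0 < c) (hder : ∀ x : ℝ, c ≤ deriv h x ∧ deriv h x ≤ C) (x : ℝ) :
    Integrable (fun u => deriv h (x - u) * gaussianPDFReal 0 ⟨a, ha.le⟩ u) := by
  have hC : 0 < C := lt_of_lt_of_le hc (le_trans (hder 0).1 (hder 0).2)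
  have habs : ∀ z : ℝ, |deriv h z| ≤ C := fun z =>
    abs_le.2 ⟨by linarith [(hder z).1], (hder z).2⟩
  have hK_int : Integrable (gaussianPDFReal 0 ⟨a, ha.le⟩) := integrable_gaussianPDFReal _ _
  refine (hK_int.const_mul C).mono'
    (((((hh.continuous_deriv le_rfl).comp (continuous_const.sub continuous_id))).mul
      (continuous_gauss_pdf ha)).aestronglyMeasurable) (ae_of_all _ fun u => ?_)
  rw [Real.norm_eq_abs, abs_mul, abs_of_nonneg (gaussianPDFReal_nonneg 0 ⟨a, ha.le⟩ u)]
  exact mul_le_mul_of_nonneg_right (habs _) (gaussianPDFReal_nonneg _ _ _)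

lemma heat_deriv_bounds {a : ℝ} (ha : 0 < a) {h : ℝ → ℝ} (hh : ContDiff ℝ 1 h)
    {c C : ℝ} (hc : 0 < c) (hder : ∀ x : ℝ, c ≤ deriv h x ∧ deriv h x ≤ C) (x : ℝ) :
    c ≤ (∫ u, deriv h (x - u) * gaussianPDFReal 0 ⟨a, ha.le⟩ u) ∧
      (∫ u, deriv h (x - u) * gaussianPDFReal 0 ⟨a, ha.le⟩ u) ≤ C := by
  set K : ℝ → ℝ := gaussianPDFReal 0 ⟨a, ha.le⟩ with hK
  have hK_nonneg : ∀ u, 0 ≤ K u := fun u => gaussianPDFReal_nonneg _ _ _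
  have hK_int : Integrable K := integrable_gaussianPDFReal _ _
  have hK_one : ∫ u, K u = 1 := integral_gaussianPDFReal_eq_one _ (by
    exact fun h0 => ha.ne' (congrArg NNReal.toReal h0))
  have hint := heat_deriv_integrable ha hh hc hder x
  constructor
  · have h1 : (∫ u, c * K u) ≤ ∫ u, deriv h (x - u) * K u :=
      integral_mono (hK_int.const_mul c) hint
        (fun u => mul_le_mul_of_nonneg_right (hder _).1 (hK_nonneg u))
    rwa [integral_const_mul, hK_one, mul_one] at h1
  · have h1 : (∫ u, deriv h (x - u) * K u) ≤ ∫ u, C * K u :=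
      integral_mono hint (hK_int.const_mul C)
        (fun u => mul_le_mul_of_nonneg_right (hder _).2 (hK_nonneg u))
    rwa [integral_const_mul, hK_one, mul_one] at h1


lemma min_at_of_deriv (W W' : ℝ → ℝ) (hW : ∀ z, HasDerivAt W (W' z) z) (z₀ : ℝ)
    (hneg : ∀ z, z ≤ z₀ → W' z ≤ 0) (hpos : ∀ z, z₀ ≤ z → 0 ≤ W' z) :
    ∀ z, W z₀ ≤ W z := by
  have hdiff : Differentiable ℝ W := fun z => (hW z).differentiableAt
  have hderiv : deriv W = W' := funext fun z => (hW z).deriv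
  intro z
  rcases le_total z z₀ with hz | hz
  · have hanti : AntitoneOn W (Iic z₀) := by
      refine antitoneOn_of_deriv_nonpos (convex_Iic z₀) hdiff.continuous.continuousOn
        (hdiff.differentiableOn) fun x hx => ?_
      rw [hderiv]
      exact hneg x (le_of_lt (by simpa using hx))
    exact hanti (mem_Iic.2 hz) (mem_Iic.2 le_rfl) hz
  · have hmono : MonotoneOn W (Ici z₀) := by
      refine monotoneOn_of_deriv_nonneg (convex_Ici z₀) hdiff.continuous.continuousOn
        (hdiff.differentiableOn) fun x hx => ?_
      rw [hderiv]
      exact hpos x (le_of_lt (by simpa using hx))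
    exact hmono (mem_Ici.2 le_rfl) (mem_Ici.2 hz) hz

lemma nonneg_of_unimodal (U g φ : ℝ → ℝ) (hφ : ∀ z, 0 ≤ φ z)
    (hU : ∀ z, HasDerivAt U (-(g z) * φ z) z) (hg : Monotone g)
    (htop : Tendsto U atTop (𝓝 0)) (hbot : Tendsto U atBot (𝓝 0)) :
    ∀ z, 0 ≤ U z := by
  have hdiff : Differentiable ℝ U := fun z => (hU z).differentiableAt
  have hderiv : deriv U = fun z => -(g z) * φ z := funext fun z => (hU z).deriv
  intro z
  rcases le_total (g z) 0 with hgz | hgz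
  · have hmono : MonotoneOn U (Iic z) := by
      refine monotoneOn_of_deriv_nonneg (convex_Iic z) hdiff.continuous.continuousOn
        (hdiff.differentiableOn) fun x hx => ?_
      rw [hderiv]
      have : g x ≤ 0 := le_trans (hg (le_of_lt (by simpa using hx))) hgz
      exact mul_nonneg (by linarith) (hφ x)
    refine le_of_tendsto hbot ?_
    filter_upwards [eventually_le_atBot z] with w hw
    exact hmono (mem_Iic.2 hw) (mem_Iic.2 le_rfl) hw
  · have hanti : AntitoneOn U (Ici z) := by
      refine antitoneOn_of_deriv_nonpos (convex_Ici z) hdiff.continuous.continuousOn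
        (hdiff.differentiableOn) fun x hx => ?_
      rw [hderiv]
      have : 0 ≤ g x := le_trans hgz (hg (le_of_lt (by simpa using hx)))
      exact mul_nonpos_of_nonpos_of_nonneg (by linarith) (hφ x)
    refine le_of_tendsto htop ?_
    filter_upwards [eventually_ge_atTop z] with w hw
    exact hanti (mem_Ici.2 le_rfl) (mem_Ici.2 hw) hw


lemma lip_sub_const (m : ℝ) : LipschitzWith 1 (fun u : ℝ => u - m) := by
  refine LipschitzWith.of_dist_le_mul fun u v => ?_
  simp [Real.dist_eq]

section Core

variable {ι : ℝ} (hι : 0 < ι) {f f' : ℝ → ℝ} (hfd : ∀ z, HasDerivAt f (f' z) z)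
  {c1 C1 : ℝ} (hc1 : 0 < c1) (hlb : ∀ z, c1 ≤ f' z) (hub : ∀ z, f' z ≤ C1)
  (hsurj : Function.Surjective f)
  {m : ℝ} (hm : m = ∫ x, f x * gaussianPDFReal 0 ⟨ι, hι.le⟩ x)

include hι hfd hc1 hlb hub hsurj hm in
lemma core :
    ∃ T0 : ℝ, 0 < T0 ∧ (∫ x, |f x - m| * gaussianPDFReal 0 ⟨ι, hι.le⟩ x) = 2 * T0 ∧
    ∀ z : ℝ,
      T0 / (C1 ^ 2 * ι) * rexp (-(f z - m) ^ 2 / (2 * c1 ^ 2 * ι)) ≤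
          gaussianPDFReal 0 ⟨ι, hι.le⟩ z / f' z ∧
      gaussianPDFReal 0 ⟨ι, hι.le⟩ z / f' z ≤
          T0 / (c1 ^ 2 * ι) * rexp (-(f z - m) ^ 2 / (2 * C1 ^ 2 * ι)) := by
  have hι' : ι ≠ 0 := hι.ne'
  have hC1 : 0 < C1 := lt_of_lt_of_le hc1 (le_trans (hlb 0) (hub 0))
  set φ : ℝ → ℝ := gaussianPDFReal 0 ⟨ι, hι.le⟩ with hφdef
  have hφ_nonneg : ∀ z, 0 ≤ φ z := fun z => gaussianPDFReal_nonneg _ _ _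
  have hφ_pos : ∀ z, 0 < φ z := fun z => gauss_pdf_pos hι z
  have hφ_cont : Continuous φ := continuous_gauss_pdf hι
  have hφ_int : Integrable φ := integrable_gaussianPDFReal _ _
  have hφ_one : ∫ z, φ z = 1 := integral_gaussianPDFReal_eq_one _ (by
    exact fun h0 => hι.ne' (congrArg NNReal.toReal h0))
  -- derivative of φ
  have hφ' : ∀ z, HasDerivAt φ (-(z / ι) * φ z) z := by
    intro z
    have h1 : HasDerivAt (fun z : ℝ => -(2 * ι)⁻¹ * z ^ 2) (-(2 * ι)⁻¹ * (2 * z)) z := by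
      simpa [mul_comm] using (hasDerivAt_pow 2 z).const_mul (-(2 * ι)⁻¹)
    have h2 := (h1.exp).const_mul (√(2 * π * ι))⁻¹
    have heq : φ = fun z => (√(2 * π * ι))⁻¹ * rexp (-(2 * ι)⁻¹ * z ^ 2) :=
      funext fun z => gauss_pdf_eq hι z
    rw [heq]
    refine h2.congr_deriv ?_
    beta_reduce
    ring
  -- limits of φ
  have hsq_top : Tendsto (fun z : ℝ => z ^ 2) atTop atTop := tendsto_pow_atTop two_ne_zero
  have hsq_bot : Tendsto (fun z : ℝ => z ^ 2) atBot atTop := by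
    have := hsq_top.comp tendsto_neg_atBot_atTop
    simpa [Function.comp_def] using this
  have hexp_lim : ∀ (l : Filter ℝ), Tendsto (fun z : ℝ => z ^ 2) l atTop →
      Tendsto φ l (𝓝 0) := by
    intro l hl
    have h1 : Tendsto (fun z : ℝ => -(2 * ι)⁻¹ * z ^ 2) l atBot := by
      rw [show (fun z : ℝ => -(2 * ι)⁻¹ * z ^ 2) = fun z : ℝ => (2 * ι)⁻¹ * (-(z ^ 2)) by
        ext z; ring]
      exact (tendsto_const_mul_atBot_of_pos (by positivity)).2
        (tendsto_neg_atTop_atBot.comp hl)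
    have h2 : Tendsto (fun z : ℝ => rexp (-(2 * ι)⁻¹ * z ^ 2)) l (𝓝 0) :=
      Real.tendsto_exp_atBot.comp h1
    have heq : φ = fun z => (√(2 * π * ι))⁻¹ * rexp (-(2 * ι)⁻¹ * z ^ 2) :=
      funext fun z => gauss_pdf_eq hι z
    rw [heq]
    simpa using h2.const_mul (√(2 * π * ι))⁻¹
  have hφ_top : Tendsto φ atTop (𝓝 0) := hexp_lim _ hsq_top
  have hφ_bot : Tendsto φ atBot (𝓝 0) := hexp_lim _ hsq_bot
  -- f basic facts
  have hfdiff : Differentiable ℝ f := fun z => (hfd z).differentiableAt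
  have hfderiv : deriv f = f' := funext fun z => (hfd z).deriv
  have hfmono : StrictMono f := strictMono_of_deriv_pos (fun z => by
    rw [hfderiv]; exact lt_of_lt_of_le hc1 (hlb z))
  have hflip : LipschitzWith ⟨C1, hC1.le⟩ f := by
    refine lipschitzWith_of_nnnorm_deriv_le hfdiff fun z => ?_
    apply NNReal.coe_le_coe.1
    simp only [coe_nnnorm, Real.norm_eq_abs, hfderiv, NNReal.coe_mk]
    exact abs_le.2 ⟨by linarith [hlb z], hub z⟩
  -- ψ and its properties
  set ψ : ℝ → ℝ := fun w => (f w - m) * φ w with hψdef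
  have hψ_cont : Continuous ψ := (hfdiff.continuous.sub continuous_const).mul hφ_cont
  have hψ_int : Integrable ψ := by
    have : LipschitzWith (1 * ⟨C1, hC1.le⟩) (fun w => f w - m) :=
      (lip_sub_const m).comp hflip
    exact integrable_lip_mul_gauss hι this
  have hfφ_int : Integrable (fun x => f x * φ x) := integrable_lip_mul_gauss hι hflip
  have hψ_total : ∫ w, ψ w = 0 := by
    have h1 : ∫ w, ψ w = (∫ w, f w * φ w) - ∫ w, m * φ w := by
      rw [← integral_sub hfφ_int (hφ_int.const_mul m)]
      congr 1; ext w; simp [hψdef]; ring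
    rw [h1, integral_const_mul, hφ_one, ← hm]
    ring
  -- the function T
  set T : ℝ → ℝ := fun z => ∫ w in Ioi z, ψ w with hTdef
  have hIic : ∀ z : ℝ, (∫ w in Iic z, ψ w) + T z = 0 := by
    intro z
    rw [hTdef, ← hψ_total]
    exact intervalIntegral.integral_Iic_add_Ioi hψ_int.integrableOn hψ_int.integrableOn
  have hTz : ∀ z : ℝ, T z = T 0 - ∫ w in (0:ℝ)..z, ψ w := by
    intro z
    have h2 : (∫ w in Iic z, ψ w) - ∫ w in Iic (0:ℝ), ψ w = ∫ w in (0:ℝ)..z, ψ w :=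
      intervalIntegral.integral_Iic_sub_Iic hψ_int.integrableOn hψ_int.integrableOn
    have h0 := hIic 0
    have h1 := hIic z
    linarith
  have hT' : ∀ z, HasDerivAt T (-ψ z) z := by
    intro z
    have h3 : HasDerivAt (fun u => ∫ w in (0:ℝ)..u, ψ w) (ψ z) z :=
      intervalIntegral.integral_hasDerivAt_right hψ_int.intervalIntegrable
        (hψ_cont.stronglyMeasurable.stronglyMeasurableAtFilter) hψ_cont.continuousAt
    have heq : T = fun u => T 0 - ∫ w in (0:ℝ)..u, ψ w := funext hTz
    rw [heq]
    exact h3.const_sub (T 0)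
  have hT_0 : T 0 = ∫ w in Ioi (0:ℝ), ψ w := rfl
  have hT_top : Tendsto T atTop (𝓝 0) := by
    have h1 := intervalIntegral_tendsto_integral_Ioi 0 hψ_int.integrableOn tendsto_id
    have heq : T = fun u => T 0 - ∫ w in (0:ℝ)..u, ψ w := funext hTz
    rw [heq]
    have h2 := (tendsto_const_nhds (x := T 0) (f := atTop)).sub h1
    simpa [← hT_0] using h2
  have hT_bot : Tendsto T atBot (𝓝 0) := by
    have h1 := intervalIntegral_tendsto_integral_Iic 0 hψ_int.integrableOn tendsto_id
    have heq : T = fun u => T 0 + ∫ w in u..(0:ℝ), ψ w := by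
      funext u
      rw [hTz u, intervalIntegral.integral_symm]
      ring
    rw [heq]
    have h2 := (tendsto_const_nhds (x := T 0) (f := atBot)).add h1
    have h3 : T 0 + ∫ w in Iic (0:ℝ), ψ w = 0 := by linarith [hIic 0]
    simpa [h3] using h2
  -- lower bound on T
  have hUlow : ∀ z, c1 * ι * φ z ≤ T z := by
    have hgd : ∀ z, HasDerivAt (fun z => f z - c1 * z - m) (f' z - c1) z := by
      intro z
      have := ((hfd z).sub ((hasDerivAt_id z).const_mul c1)).sub_const m
      simpa using this
    have hg : Monotone (fun z => f z - c1 * z - m) := by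
      refine monotone_of_deriv_nonneg (fun z => (hgd z).differentiableAt) fun z => ?_
      rw [(hgd z).deriv]
      linarith [hlb z]
    have hU' : ∀ z, HasDerivAt (fun z => T z - c1 * ι * φ z)
        (-(f z - c1 * z - m) * φ z) z := by
      intro z
      have hh2 := (hT' z).sub ((hφ' z).const_mul (c1 * ι))
      refine hh2.congr_deriv ?_
      simp only [hψdef]
      field_simp
      ring
    have hlim_top : Tendsto (fun z => T z - c1 * ι * φ z) atTop (𝓝 0) := by
      have := hT_top.sub (hφ_top.const_mul (c1 * ι))
      simpa using this
    have hlim_bot : Tendsto (fun z => T z - c1 * ι * φ z) atBot (𝓝 0) := by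
      have := hT_bot.sub (hφ_bot.const_mul (c1 * ι))
      simpa using this
    have := nonneg_of_unimodal _ _ φ hφ_nonneg hU' hg hlim_top hlim_bot
    intro z
    linarith [this z]
  -- upper bound on T
  have hVup : ∀ z, T z ≤ C1 * ι * φ z := by
    have hgd : ∀ z, HasDerivAt (fun z => C1 * z + m - f z) (C1 - f' z) z := by
      intro z
      have := (((hasDerivAt_id z).const_mul C1).add_const m).sub (hfd z)
      exact this.congr_deriv (by ring)
    have hg : Monotone (fun z => C1 * z + m - f z) := by
      refine monotone_of_deriv_nonneg (fun z => (hgd z).differentiableAt) fun z => ?_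
      rw [(hgd z).deriv]
      linarith [hub z]
    have hU' : ∀ z, HasDerivAt (fun z => C1 * ι * φ z - T z)
        (-(C1 * z + m - f z) * φ z) z := by
      intro z
      have hh2 := ((hφ' z).const_mul (C1 * ι)).sub (hT' z)
      refine hh2.congr_deriv ?_
      simp only [hψdef]
      field_simp
      ring
    have hlim_top : Tendsto (fun z => C1 * ι * φ z - T z) atTop (𝓝 0) := by
      have := (hφ_top.const_mul (C1 * ι)).sub hT_top
      simpa using this
    have hlim_bot : Tendsto (fun z => C1 * ι * φ z - T z) atBot (𝓝 0) := by
      have := (hφ_bot.const_mul (C1 * ι)).sub hT_bot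
      simpa using this
    have := nonneg_of_unimodal _ _ φ hφ_nonneg hU' hg hlim_top hlim_bot
    intro z
    linarith [this z]
  obtain ⟨z₀, hz₀⟩ := hsurj m
  have hT0 : 0 < T z₀ := lt_of_lt_of_le (mul_pos (mul_pos hc1 hι) (hφ_pos z₀)) (hUlow z₀)
  have hTpos : ∀ z, 0 < T z := fun z => lt_of_lt_of_le (mul_pos (mul_pos hc1 hι) (hφ_pos z)) (hUlow z)
  -- derivative of the W functions
  have hWd : ∀ k : ℝ, 0 < k → ∀ z, HasDerivAt
      (fun z => Real.log (T z) + (f z - m) ^ 2 / (2 * k * ι))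
      ((f z - m) * (f' z / (k * ι) - φ z / T z)) z := by
    intro k hk z
    have h1 : HasDerivAt (fun z => Real.log (T z)) (-ψ z / T z) z :=
      (hT' z).log (hTpos z).ne'
    have h2 : HasDerivAt (fun z => (f z - m) ^ 2)
        ((2 : ℕ) * (f z - m) ^ 1 * f' z) z := ((hfd z).sub_const m).pow 2
    have h3 := h1.add (h2.div_const (2 * k * ι))
    refine h3.congr_deriv ?_
    simp only [hψdef, pow_one, Nat.cast_ofNat]
    have hT_ne : T z ≠ 0 := (hTpos z).ne'
    field_simp
    ring
  -- two-sided bounds on T via the minimum of W at z₀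
  have hWlow : ∀ z, T z₀ * rexp (-(f z - m) ^ 2 / (2 * c1 ^ 2 * ι)) ≤ T z := by
    have hbr : ∀ z, 0 ≤ f' z / (c1 ^ 2 * ι) - φ z / T z := by
      intro z
      rw [sub_nonneg, div_le_div_iff₀ (hTpos z) (by positivity)]
      calc φ z * (c1 ^ 2 * ι) = c1 * (c1 * ι * φ z) := by ring
        _ ≤ f' z * T z :=
          mul_le_mul (hlb z) (hUlow z) (mul_pos (mul_pos hc1 hι) (hφ_pos z)).le
            (by linarith [hlb z, hc1])
    have hmin := min_at_of_deriv _ _ (hWd (c1 ^ 2) (by positivity)) z₀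
      (fun z hz => mul_nonpos_of_nonpos_of_nonneg
        (by have := hfmono.monotone hz; rw [hz₀] at this; linarith) (hbr z))
      (fun z hz => mul_nonneg
        (by have := hfmono.monotone hz; rw [hz₀] at this; linarith) (hbr z))
    intro z
    have h5 := hmin z
    simp only [hz₀, sub_self, ne_eq, OfNat.ofNat_ne_zero, not_false_eq_true, zero_pow,
      zero_div, add_zero] at h5
    have h6 : Real.log (T z₀) + -(f z - m) ^ 2 / (2 * c1 ^ 2 * ι) ≤ Real.log (T z) := by
      rw [neg_div]
      linarith
    calc T z₀ * rexp (-(f z - m) ^ 2 / (2 * c1 ^ 2 * ι))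
        = rexp (Real.log (T z₀) + -(f z - m) ^ 2 / (2 * c1 ^ 2 * ι)) := by
          rw [Real.exp_add, Real.exp_log hT0]
      _ ≤ rexp (Real.log (T z)) := Real.exp_le_exp.2 h6
      _ = T z := Real.exp_log (hTpos z)
  have hWup : ∀ z, T z ≤ T z₀ * rexp (-(f z - m) ^ 2 / (2 * C1 ^ 2 * ι)) := by
    have hbr : ∀ z, f' z / (C1 ^ 2 * ι) - φ z / T z ≤ 0 := by
      intro z
      rw [sub_nonpos, div_le_div_iff₀ (by positivity) (hTpos z)]
      calc f' z * T z ≤ C1 * (C1 * ι * φ z) :=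
            mul_le_mul (hub z) (hVup z) (hTpos z).le hC1.le
        _ = φ z * (C1 ^ 2 * ι) := by ring
    have hmin := min_at_of_deriv
      (fun z => -(Real.log (T z) + (f z - m) ^ 2 / (2 * C1 ^ 2 * ι)))
      (fun z => -((f z - m) * (f' z / (C1 ^ 2 * ι) - φ z / T z)))
      (fun z => (hWd (C1 ^ 2) (by positivity) z).neg) z₀
      (fun z hz => by
        have hfzm : f z - m ≤ 0 := by
          have := hfmono.monotone hz; rw [hz₀] at this; linarith
        nlinarith [hbr z])
      (fun z hz => by
        have hfzm : 0 ≤ f z - m := by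
          have := hfmono.monotone hz; rw [hz₀] at this; linarith
        nlinarith [hbr z])
    intro z
    have h5 := hmin z
    simp only [hz₀, sub_self, ne_eq, OfNat.ofNat_ne_zero, not_false_eq_true, zero_pow,
      zero_div, add_zero, neg_le_neg_iff] at h5
    have h6 : Real.log (T z) ≤ Real.log (T z₀) + -(f z - m) ^ 2 / (2 * C1 ^ 2 * ι) := by
      rw [neg_div]
      linarith
    calc T z = rexp (Real.log (T z)) := (Real.exp_log (hTpos z)).symm
      _ ≤ rexp (Real.log (T z₀) + -(f z - m) ^ 2 / (2 * C1 ^ 2 * ι)) :=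
          Real.exp_le_exp.2 h6
      _ = T z₀ * rexp (-(f z - m) ^ 2 / (2 * C1 ^ 2 * ι)) := by
          rw [Real.exp_add, Real.exp_log hT0]
  refine ⟨T z₀, hT0, ?_, ?_⟩
  · -- total absolute moment equals 2 * T z₀
    have habs : (fun x => |f x - m| * φ x) = fun x => |ψ x| := by
      funext x
      rw [hψdef, abs_mul, abs_of_nonneg (hφ_nonneg x)]
    rw [habs]
    have hIoi_eq : ∫ x in Ioi z₀, |ψ x| = T z₀ := by
      refine setIntegral_congr_fun measurableSet_Ioi fun x hx => ?_
      have hfx : m ≤ f x := by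
        rw [← hz₀]; exact (hfmono.le_iff_le).2 (le_of_lt hx)
      exact abs_of_nonneg (mul_nonneg (by linarith) (hφ_nonneg x))
    have hIic_eq : ∫ x in Iic z₀, |ψ x| = T z₀ := by
      have h1 : ∫ x in Iic z₀, |ψ x| = ∫ x in Iic z₀, -ψ x := by
        refine setIntegral_congr_fun measurableSet_Iic fun x hx => ?_
        have hfx : f x ≤ m := by
          rw [← hz₀]; exact (hfmono.le_iff_le).2 hx
        exact abs_of_nonpos (mul_nonpos_of_nonpos_of_nonneg (by linarith) (hφ_nonneg x))
      rw [h1, integral_neg]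
      linarith [hIic z₀]
    have hsplit : (∫ x in Iic z₀, |ψ x|) + ∫ x in Ioi z₀, |ψ x| = ∫ x, |ψ x| :=
      intervalIntegral.integral_Iic_add_Ioi hψ_int.abs.integrableOn hψ_int.abs.integrableOn
    rw [← hsplit, hIoi_eq, hIic_eq]
    ring
  · -- pointwise bounds on φ z / f' z
    intro z
    have hf'pos : 0 < f' z := lt_of_lt_of_le hc1 (hlb z)
    constructor
    · have h7 : T z / (C1 ^ 2 * ι) ≤ φ z / f' z := by
        rw [div_le_div_iff₀ (by positivity) hf'pos]
        calc T z * f' z ≤ C1 * ι * φ z * C1 :=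
              mul_le_mul (hVup z) (hub z) hf'pos.le
                (mul_pos (mul_pos hC1 hι) (hφ_pos z)).le
          _ = φ z * (C1 ^ 2 * ι) := by ring
      calc T z₀ / (C1 ^ 2 * ι) * rexp (-(f z - m) ^ 2 / (2 * c1 ^ 2 * ι))
          = T z₀ * rexp (-(f z - m) ^ 2 / (2 * c1 ^ 2 * ι)) / (C1 ^ 2 * ι) := by ring
        _ ≤ T z / (C1 ^ 2 * ι) := (div_le_div_iff_of_pos_right (by positivity)).2 (hWlow z)
        _ ≤ φ z / f' z := h7
    · have h7 : φ z / f' z ≤ T z / (c1 ^ 2 * ι) := by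
        rw [div_le_div_iff₀ hf'pos (by positivity)]
        calc φ z * (c1 ^ 2 * ι) = c1 * (c1 * ι * φ z) := by ring
          _ ≤ f' z * T z := mul_le_mul (hlb z) (hUlow z)
              (mul_pos (mul_pos hc1 hι) (hφ_pos z)).le (by linarith)
          _ = T z * f' z := by ring
      calc φ z / f' z ≤ T z / (c1 ^ 2 * ι) := h7
        _ ≤ T z₀ * rexp (-(f z - m) ^ 2 / (2 * C1 ^ 2 * ι)) / (c1 ^ 2 * ι) :=
            (div_le_div_iff_of_pos_right (by positivity)).2 (hWup z)
        _ = T z₀ / (c1 ^ 2 * ι) * rexp (-(f z - m) ^ 2 / (2 * C1 ^ 2 * ι)) := by ring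

end Core

end Stmt6

open MeasureTheory ProbabilityTheory Real Filter Set Topology
open scoped NNReal

/-- Theorem 3.1 (first part): Gaussian two-sided density bounds for
`Y = κ·(P_a h)(A+G) + D` with `G` centered Gaussian of variance `ι`. -/
theorem stmt_6 {Ω : Type*} [MeasurableSpace Ω] (P : Measure Ω) [IsProbabilityMeasure P]
    (a ι κ : ℝ) (ha : 0 < a) (hι : 0 < ι) (hκ : 0 < κ) (A D : ℝ)
    (h : ℝ → ℝ) (hh : ContDiff ℝ 1 h) (c C : ℝ) (hc : 0 < c)
    (hder : ∀ x : ℝ, c ≤ deriv h x ∧ deriv h x ≤ C)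
    (G : Ω → ℝ) (hG : Measure.map G P = gaussianReal 0 ⟨ι, hι.le⟩)
    (Y : Ω → ℝ) (hY : Y = fun ω => κ * heatP a h (A + G ω) + D)
    (EY : ℝ) (hEY : EY = ∫ ω, Y ω ∂P) :
    ∃ p : ℝ → ℝ,
      Measure.map Y P = volume.withDensity (fun x => ENNReal.ofReal (p x)) ∧
      ∀ᵐ x ∂(volume : Measure ℝ),
        (∫ ω, |Y ω - EY| ∂P) / (2 * C ^ 2 * κ ^ 2 * ι) *
            Real.exp (-(x - EY) ^ 2 / (2 * c ^ 2 * κ ^ 2 * ι)) ≤ p x ∧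
        p x ≤ (∫ ω, |Y ω - EY| ∂P) / (2 * c ^ 2 * κ ^ 2 * ι) *
            Real.exp (-(x - EY) ^ 2 / (2 * C ^ 2 * κ ^ 2 * ι)) := by
  classical
  have hvne : (⟨ι, hι.le⟩ : ℝ≥0) ≠ 0 :=
    fun h0 => hι.ne' (congrArg NNReal.toReal h0)
  have hC : 0 < C := lt_of_lt_of_le hc (le_trans (hder 0).1 (hder 0).2)
  -- G is a.e. measurable
  have hGm : AEMeasurable G P := by
    by_contra hGm
    rw [Measure.map_of_not_aemeasurable hGm] at hG
    have h1 : (gaussianReal 0 ⟨ι, hι.le⟩) univ = 1 :=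
      @measure_univ _ _ _ (instIsProbabilityMeasureGaussianReal 0 ⟨ι, hι.le⟩)
    rw [← hG] at h1
    simp at h1
  -- the function f and its derivative
  set q : ℝ → ℝ := fun x => ∫ u, deriv h (x - u) * gaussianPDFReal 0 ⟨a, ha.le⟩ u with hqdef
  have hheat : ∀ x, HasDerivAt (heatP a h) (q x) x := Stmt6.hasDerivAt_heatP ha hh hc hder
  have hqb : ∀ x, c ≤ q x ∧ q x ≤ C := Stmt6.heat_deriv_bounds ha hh hc hder
  set f : ℝ → ℝ := fun z => κ * heatP a h (A + z) + D with hfdef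
  set f' : ℝ → ℝ := fun z => κ * q (A + z) with hf'def
  have hfd : ∀ z, HasDerivAt f (f' z) z := by
    intro z
    have h1 : HasDerivAt (fun z : ℝ => A + z) 1 z := (hasDerivAt_id z).const_add A
    have h2 := (hheat (A + z)).comp z h1
    have h3 := (h2.const_mul κ).add_const D
    simpa [hfdef, hf'def] using h3
  have hcκ : 0 < c * κ := mul_pos hc hκ
  have hlb : ∀ z, c * κ ≤ f' z := by
    intro z
    rw [hf'def]
    calc c * κ = κ * c := mul_comm _ _
      _ ≤ κ * q (A + z) := mul_le_mul_of_nonneg_left (hqb _).1 hκ.le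
  have hub : ∀ z, f' z ≤ C * κ := by
    intro z
    rw [hf'def]
    calc κ * q (A + z) ≤ κ * C := mul_le_mul_of_nonneg_left (hqb _).2 hκ.le
      _ = C * κ := mul_comm _ _
  have hfderiv : deriv f = f' := funext fun z => (hfd z).deriv
  have hfdiff : Differentiable ℝ f := fun z => (hfd z).differentiableAt
  have hfmono : StrictMono f := strictMono_of_deriv_pos fun z => by
    rw [hfderiv]; exact lt_of_lt_of_le hcκ (hlb z)
  -- surjectivity of f
  have hgrow := mul_sub_le_image_sub_of_le_deriv hfdiff
    (fun z => by rw [hfderiv]; exact hlb z)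
  have hfsurj : Function.Surjective f := by
    apply hfdiff.continuous.surjective
    · have hlow : Tendsto (fun z : ℝ => f 0 + c * κ * z) atTop atTop :=
        tendsto_atTop_add_const_left _ _ ((tendsto_const_mul_atTop_of_pos hcκ).2 tendsto_id)
      refine tendsto_atTop_mono' atTop ?_ hlow
      filter_upwards [eventually_ge_atTop (0:ℝ)] with z hz
      have := hgrow hz
      simp only [sub_zero] at this
      linarith
    · have hlow : Tendsto (fun z : ℝ => f 0 + c * κ * z) atBot atBot :=
        tendsto_atBot_add_const_left _ _ ((tendsto_const_mul_atBot_of_pos hcκ).2 tendsto_id)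
      refine tendsto_atBot_mono' atBot ?_ hlow
      filter_upwards [eventually_le_atBot (0:ℝ)] with z hz
      have := hgrow hz
      simp only [zero_sub] at this
      linarith
    -- inverse function
  set e : ℝ ≃o ℝ := StrictMono.orderIsoOfSurjective f hfmono hfsurj with hedef
  set g : ℝ → ℝ := ⇑e.symm with hgdef
  have hfg : ∀ x, f (g x) = x := fun x =>
    StrictMono.orderIsoOfSurjective_self_symm_apply f hfmono hfsurj x
  have hg_cont : Continuous g := (OrderIso.toHomeomorph e.symm).continuous
  have hf'pos : ∀ z, 0 < f' z := fun z => lt_of_lt_of_le hcκ (hlb z)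
  have hgd : ∀ x, HasDerivAt g ((f' (g x))⁻¹) x := fun x =>
    HasDerivAt.of_local_left_inverse hg_cont.continuousAt (hfd (g x))
      (hf'pos (g x)).ne' (Filter.Eventually.of_forall hfg)
  -- measurable equivalence
  set F : ℝ ≃ᵐ ℝ := (OrderIso.toHomeomorph e).toMeasurableEquiv.symm with hFdef
  have hFcoe : ⇑F = g := rfl
  have hFsymm : ⇑F.symm = f := rfl
  -- the density
  set p : ℝ → ℝ := fun x => |(f' (g x))⁻¹| * gaussianPDFReal 0 ⟨ι, hι.le⟩ (g x) with hpdef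
  have hp_nonneg : ∀ x, 0 ≤ p x := fun x =>
    mul_nonneg (abs_nonneg _) (gaussianPDFReal_nonneg _ _ _)
  have hFd : ∀ x, HasDerivAt (⇑F) ((f' (g x))⁻¹) x := by rw [hFcoe]; exact hgd
  have key : ∀ s : Set ℝ, MeasurableSet s →
      (gaussianReal 0 ⟨ι, hι.le⟩).map f s = ENNReal.ofReal (∫ x in s, p x) := by
    intro s hs
    have h1 := MeasurableEquiv.gaussianReal_map_symm_apply (μ := 0) hvne F hFd hs
    rw [hFsymm] at h1
    rw [h1]
    congr 1
  have h_mapY : Measure.map Y P = (gaussianReal 0 ⟨ι, hι.le⟩).map f := by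
    rw [hY]
    have h2 : (fun ω => κ * heatP a h (A + G ω) + D) = f ∘ G := rfl
    rw [h2, ← AEMeasurable.map_map_of_aemeasurable
      (hfdiff.continuous.measurable.aemeasurable) hGm, hG]
  have hp_int : Integrable p := by
    by_contra hp
    have h1 := key univ MeasurableSet.univ
    rw [Measure.restrict_univ, integral_undef hp] at h1
    have h2 : (gaussianReal 0 ⟨ι, hι.le⟩).map f univ = 1 :=
      by haveI := instIsProbabilityMeasureGaussianReal 0 ⟨ι, hι.le⟩
         exact (Measure.isProbabilityMeasure_map (hfdiff.continuous.measurable.aemeasurable)).measure_univ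
    rw [h2] at h1
    simp at h1
  have hmap : Measure.map Y P = volume.withDensity fun x => ENNReal.ofReal (p x) := by
    rw [h_mapY]
    refine Measure.ext fun s hs => ?_
    rw [key s hs, withDensity_apply _ hs,
      ofReal_integral_eq_lintegral_ofReal hp_int.integrableOn
        (ae_of_all _ fun x => hp_nonneg x)]
  -- transfer of expectations
  have hint_map : ∀ F₀ : ℝ → ℝ, Continuous F₀ →
      (∫ ω, F₀ (G ω) ∂P) = ∫ x, F₀ x * gaussianPDFReal 0 ⟨ι, hι.le⟩ x := by
    intro F₀ hF₀
    rw [← integral_map hGm hF₀.aestronglyMeasurable, hG,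
      gaussianReal_of_var_ne_zero _ hvne]
    have hd : (gaussianPDF 0 ⟨ι, hι.le⟩) = fun x =>
        ((Real.toNNReal (gaussianPDFReal 0 ⟨ι, hι.le⟩ x) : ℝ≥0) : ℝ≥0∞) := rfl
    rw [hd, integral_withDensity_eq_integral_smul
      ((stronglyMeasurable_gaussianPDFReal 0 ⟨ι, hι.le⟩).measurable.real_toNNReal) F₀]
    congr 1
    funext x
    rw [NNReal.smul_def, Real.coe_toNNReal _ (gaussianPDFReal_nonneg 0 ⟨ι, hι.le⟩ x), smul_eq_mul,
      mul_comm]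
  have hEY' : EY = ∫ x, f x * gaussianPDFReal 0 ⟨ι, hι.le⟩ x := by
    rw [hEY, hY]
    exact hint_map f hfdiff.continuous
  have habs' : (∫ ω, |Y ω - EY| ∂P) = ∫ x, |f x - EY| * gaussianPDFReal 0 ⟨ι, hι.le⟩ x := by
    rw [hY]
    exact hint_map (fun x => |f x - EY|) ((hfdiff.continuous.sub continuous_const).abs)
  -- apply the core lemma
  obtain ⟨T0, hT0pos, hMoment, hBounds⟩ := Stmt6.core hι hfd hcκ hlb hub hfsurj hEY'
  refine ⟨p, hmap, Filter.Eventually.of_forall fun x => ?_⟩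
  obtain ⟨hb1, hb2⟩ := hBounds (g x)
  rw [hfg x] at hb1 hb2
  have hpx : p x = gaussianPDFReal 0 ⟨ι, hι.le⟩ (g x) / f' (g x) := by
    simp only [hpdef]
    rw [abs_of_pos (inv_pos.2 (hf'pos (g x))), mul_comm, div_eq_mul_inv]
  constructor
  · calc (∫ ω, |Y ω - EY| ∂P) / (2 * C ^ 2 * κ ^ 2 * ι) *
        Real.exp (-(x - EY) ^ 2 / (2 * c ^ 2 * κ ^ 2 * ι))
        = T0 / ((C * κ) ^ 2 * ι) * rexp (-(x - EY) ^ 2 / (2 * (c * κ) ^ 2 * ι)) := by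
          rw [habs', hMoment,
            show (2:ℝ) * C ^ 2 * κ ^ 2 * ι = 2 * ((C * κ) ^ 2 * ι) by ring,
            show (2:ℝ) * c ^ 2 * κ ^ 2 * ι = 2 * (c * κ) ^ 2 * ι by ring,
            mul_div_mul_left _ _ (two_ne_zero)]
      _ ≤ p x := by rw [hpx]; exact hb1
  · calc p x ≤ T0 / ((c * κ) ^ 2 * ι) * rexp (-(x - EY) ^ 2 / (2 * (C * κ) ^ 2 * ι)) := by
          rw [hpx]; exact hb2
      _ = (∫ ω, |Y ω - EY| ∂P) / (2 * c ^ 2 * κ ^ 2 * ι) *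
          Real.exp (-(x - EY) ^ 2 / (2 * C ^ 2 * κ ^ 2 * ι)) := by
          rw [habs', hMoment,
            show (2:ℝ) * c ^ 2 * κ ^ 2 * ι = 2 * ((c * κ) ^ 2 * ι) by ring,
            show (2:ℝ) * C ^ 2 * κ ^ 2 * ι = 2 * (C * κ) ^ 2 * ι by ring,
            mul_div_mul_left _ _ (two_ne_zero)]
end

section
/- Let u : ℝ → ℝ be a continuous, strictly increasing bijection of ℝ onto ℝ. For a function h : ℝ → ℝ define h̄ := inf{γ > 0 : limsup_{|x|→∞} |h(x)|/|x|^{γ} < ∞} and ḣ := inf{γ > 0 : liminf_{|x|→∞} |h(x)|/|x|^{γ} < ∞}. If 0 < u̇ < ∞ (i.e., the lower growth index of u is finite and positive), then 0 < (u⁻¹)‾ < ∞ (i.e., the upper growth index of the inverse function u⁻¹ is finite and positive). -/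
open Filter Real

lemma ev_iff (P : ℝ → Prop) :
    (∀ᶠ x in comap (fun x : ℝ => |x|) atTop, P x) ↔ ∃ R : ℝ, ∀ x, R ≤ |x| → P x := by
  rw [(atTop_basis.comap _).eventually_iff]
  simp [Set.mem_preimage, Set.mem_Ici]

lemma fr_iff (P : ℝ → Prop) :
    (∃ᶠ x in comap (fun x : ℝ => |x|) atTop, P x) ↔ ∀ R : ℝ, ∃ x, R ≤ |x| ∧ P x := by
  rw [(atTop_basis.comap _).frequently_iff]
  simp [Set.mem_preimage, Set.mem_Ici]

lemma big_u (u : ℝ → ℝ) (hmono : StrictMono u) (hbij : Function.Bijective u) (C : ℝ) :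
    ∃ R : ℝ, ∀ x, R ≤ |x| → C ≤ |u x| := by
  obtain ⟨a, ha⟩ := hbij.2 (-(max C 0))
  obtain ⟨b, hb⟩ := hbij.2 (max C 0)
  refine ⟨max |a| |b| + 1, fun x hx => ?_⟩
  rcases le_abs.mp hx with h | h
  · have hbx : b ≤ x := le_trans (le_trans (le_abs_self b) (by linarith [le_max_right |a| |b|])) h
    have : max C 0 ≤ u x := hb ▸ hmono.monotone hbx
    calc C ≤ max C 0 := le_max_left _ _
      _ ≤ u x := this
      _ ≤ |u x| := le_abs_self _
  · have hax : x ≤ a := by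
      have := neg_abs_le a
      have h2 : max |a| |b| + 1 ≤ -x := h
      nlinarith [le_max_left |a| |b|]
    have hux : u x ≤ -(max C 0) := ha ▸ hmono.monotone hax
    calc C ≤ max C 0 := le_max_left _ _
      _ ≤ -(u x) := by linarith
      _ ≤ |u x| := neg_le_abs _


/-- (Mastrolia–Possamaï–Réveillac, Lemma 5.2): if the lower growth index
`u̇ = inf {γ > 0 : liminf_{|x|→∞} |u x|/|x|^γ < ∞}` of a continuous strictly increasing
bijection `u : ℝ → ℝ` is finite and positive, then the upper growth index
`(u⁻¹)‾ = inf {γ > 0 : limsup_{|x|→∞} |u⁻¹ x|/|x|^γ < ∞}` of its inverse is finite and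
positive. -/
theorem stmt_15 (u : ℝ → ℝ) (hcont : Continuous u) (hmono : StrictMono u)
    (hbij : Function.Bijective u) (Slow Supinv : Set ℝ)
    (hSlow : Slow = {γ : ℝ | 0 < γ ∧ ∃ M : ℝ,
      ∃ᶠ x in Filter.comap (fun x : ℝ => |x|) Filter.atTop, |u x| / |x| ^ γ ≤ M})
    (hSupinv : Supinv = {γ : ℝ | 0 < γ ∧
      Filter.IsBoundedUnder (· ≤ ·) (Filter.comap (fun x : ℝ => |x|) Filter.atTop)
        (fun x : ℝ => |Function.invFun u x| / |x| ^ γ)})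
    (hne : Slow.Nonempty) (hpos : 0 < sInf Slow) :
    Supinv.Nonempty ∧ 0 < sInf Supinv := by
  -- Step 1: γ := sInf Slow / 2 is positive and not in Slow
  set γ := sInf Slow / 2 with hγdef
  have hγpos : 0 < γ := by positivity
  have hbdd : BddBelow Slow := ⟨0, fun z hz => by rw [hSlow] at hz; exact hz.1.le⟩
  have hγnot : γ ∉ Slow := fun h => absurd (csInf_le hbdd h) (by rw [hγdef]; linarith)
  -- so eventually |u x| / |x|^γ > 1
  have hev : ∀ᶠ x in comap (fun x : ℝ => |x|) atTop, ¬ (|u x| / |x| ^ γ ≤ 1) := by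
    rw [hSlow] at hγnot
    simp only [Set.mem_setOf_eq, not_and, not_exists] at hγnot
    exact not_frequently.mp (hγnot hγpos 1)
  obtain ⟨R₀, hR₀⟩ := (ev_iff _).mp hev
  -- Step 2: the inverse exponent γ⁻¹ belongs to Supinv
  have hmem : γ⁻¹ ∈ Supinv := by
    rw [hSupinv]
    refine ⟨inv_pos.mpr hγpos, max R₀ 1, ?_⟩
    rw [eventually_map, ev_iff]
    refine ⟨1, fun y hy => ?_⟩
    set x := Function.invFun u y with hxdef
    have hux : u x = y := Function.invFun_eq (hbij.2 y)
    have hy1 : (1 : ℝ) ≤ |y| ^ γ⁻¹ :=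
      Real.one_le_rpow hy (by positivity)
    rcases le_or_gt |x| (max R₀ 1) with hc | hc
    · calc |x| / |y| ^ γ⁻¹ ≤ |x| := div_le_self (abs_nonneg x) hy1
        _ ≤ max R₀ 1 := hc
    · have hx1 : (1 : ℝ) ≤ |x| := le_trans (le_max_right _ _) hc.le
      have hxγpos : (0 : ℝ) < |x| ^ γ := Real.rpow_pos_of_pos (by linarith) γ
      have h1 : (1 : ℝ) < |u x| / |x| ^ γ := by
        have := hR₀ x (le_trans (le_max_left _ _) hc.le)
        linarith [lt_of_not_ge this]
      have h2 : |x| ^ γ ≤ |y| := by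
        rw [← hux]
        exact le_of_lt ((one_lt_div hxγpos).mp h1)
      have h3 : |x| ≤ |y| ^ γ⁻¹ := by
        have := Real.rpow_le_rpow (le_of_lt hxγpos) h2 (inv_nonneg.mpr hγpos.le)
        rwa [← Real.rpow_mul (abs_nonneg x), mul_inv_cancel₀ (ne_of_gt hγpos),
          Real.rpow_one] at this
      calc |x| / |y| ^ γ⁻¹ ≤ 1 := (div_le_one (by linarith)).mpr h3
        _ ≤ max R₀ 1 := le_max_right _ _
  have hSne : Supinv.Nonempty := ⟨γ⁻¹, hmem⟩
  refine ⟨hSne, ?_⟩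
  -- Step 3: lower bound on Supinv via an element γ₀ of Slow
  obtain ⟨γ₀, hγ₀S⟩ := hne
  rw [hSlow] at hγ₀S
  obtain ⟨hγ₀pos, M, hfr⟩ := hγ₀S
  set M' := max M 1 with hM'def
  have hM'pos : (0 : ℝ) < M' := lt_of_lt_of_le one_pos (le_max_right _ _)
  have hfr' : ∀ R : ℝ, ∃ x, R ≤ |x| ∧ |u x| / |x| ^ γ₀ ≤ M' :=
    (fr_iff _).mp (hfr.mono fun x hx => le_trans hx (le_max_left _ _))
  have hlow : γ₀⁻¹ ≤ sInf Supinv := by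
    refine le_csInf hSne fun δ hδ => ?_
    rw [hSupinv] at hδ
    obtain ⟨hδpos, hbd⟩ := hδ
    by_contra hcon
    push_neg at hcon
    have hδγ : γ₀ * δ < 1 := by
      calc γ₀ * δ < γ₀ * γ₀⁻¹ := mul_lt_mul_of_pos_left hcon hγ₀pos
        _ = 1 := mul_inv_cancel₀ (ne_of_gt hγ₀pos)
    set ε := 1 - γ₀ * δ with hεdef
    have hεpos : 0 < ε := by linarith
    obtain ⟨B, hB⟩ := hbd
    rw [eventually_map, ev_iff] at hB
    obtain ⟨C, hC⟩ := hB
    obtain ⟨R₁, hR₁⟩ := big_u u hmono hbij (max C 1)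
    -- choose threshold
    set L := max (B * M' ^ δ) 1 + 1 with hLdef
    have hL1 : (1 : ℝ) ≤ L := by
      have := le_max_right (B * M' ^ δ) 1; linarith
    set K := L ^ ε⁻¹ with hKdef
    have hK1 : (1 : ℝ) ≤ K := Real.one_le_rpow hL1 (by positivity)
    obtain ⟨x, hxR, hxM⟩ := hfr' (max R₁ K)
    have hxK : K ≤ |x| := le_trans (le_max_right _ _) hxR
    have hx1 : (1 : ℝ) ≤ |x| := le_trans hK1 hxK
    have hxγ₀pos : (0 : ℝ) < |x| ^ γ₀ := Real.rpow_pos_of_pos (by linarith) _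
    have hux : |u x| ≤ M' * |x| ^ γ₀ := by
      nlinarith [(div_le_iff₀ hxγ₀pos).mp hxM]
    set y := u x with hydef
    have hyC : max C 1 ≤ |y| := hR₁ x (le_trans (le_max_left _ _) hxR)
    have hy1 : (1 : ℝ) ≤ |y| := le_trans (le_max_right _ _) hyC
    have hinv : Function.invFun u y = x := Function.leftInverse_invFun hbij.1 x
    have hrat : |x| / |y| ^ δ ≤ B := by
      have := hC y (le_trans (le_max_left _ _) hyC)
      rwa [hinv] at this
    have hyδpos : (0 : ℝ) < |y| ^ δ := Real.rpow_pos_of_pos (by linarith) _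
    have hxle : |x| ≤ B * |y| ^ δ := by
      nlinarith [(div_le_iff₀ hyδpos).mp hrat]
    have hyδle : |y| ^ δ ≤ M' ^ δ * |x| ^ (γ₀ * δ) := by
      calc |y| ^ δ ≤ (M' * |x| ^ γ₀) ^ δ :=
            Real.rpow_le_rpow (abs_nonneg y) hux hδpos.le
        _ = M' ^ δ * (|x| ^ γ₀) ^ δ := Real.mul_rpow hM'pos.le hxγ₀pos.le
        _ = M' ^ δ * |x| ^ (γ₀ * δ) := by rw [← Real.rpow_mul (abs_nonneg x)]
    have hBnn : 0 ≤ B := le_trans (div_nonneg (abs_nonneg x) hyδpos.le) hrat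
    have hxγδpos : (0 : ℝ) < |x| ^ (γ₀ * δ) := Real.rpow_pos_of_pos (by linarith) _
    have hmain : |x| ≤ B * M' ^ δ * |x| ^ (γ₀ * δ) := by
      calc |x| ≤ B * |y| ^ δ := hxle
        _ ≤ B * (M' ^ δ * |x| ^ (γ₀ * δ)) := by nlinarith
        _ = B * M' ^ δ * |x| ^ (γ₀ * δ) := by ring
    -- but |x|^ε ≥ L > B * M'^δ, contradiction
    have hxε : L ≤ |x| ^ ε := by
      calc L = (L ^ ε⁻¹) ^ ε := by
            rw [← Real.rpow_mul (by linarith), inv_mul_cancel₀ (ne_of_gt hεpos),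
              Real.rpow_one]
        _ ≤ |x| ^ ε := Real.rpow_le_rpow (by positivity) hxK hεpos.le
    have hsplit : |x| = |x| ^ ε * |x| ^ (γ₀ * δ) := by
      rw [← Real.rpow_add (by linarith : (0:ℝ) < |x|)]
      norm_num [hεdef]
    nlinarith [le_max_left (B * M' ^ δ) 1]
  calc (0 : ℝ) < γ₀⁻¹ := inv_pos.mpr hγ₀pos
    _ ≤ sInf Supinv := hlow
end

section
/- Let ι > 0, m ∈ ℝ, a ≥ 0, C₁ > 0, x₀ ∈ ℝ, and let φ : ℝ → ℝ be measurable with 0 ≤ φ(x) ≤ C₁(1+|x|^{a}) for all x ∈ ℝ. Let p_ι(z) := (2πι)^{−1/2} exp(−z²/(2ι)) denote the centered Gaussian density with variance ι. Then ∫₀^∞ e^{−θ} ∫_ℝ φ((1−e^{−θ})m + e^{−θ}x₀ + √(1−e^{−2θ}) z) p_ι(z) dz dθ ≤ C₁ · (1 + 3^{(a−1)₊}|m|^{a} + (3^{(a−1)₊}/(1+a))|x₀|^{a} + 3^{(a−1)₊} 2^{a/2} Γ((1+a)/2) ι^{a/2}/√π), where r₊ := max(r,0) and Γ denotes the Gamma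 function. -/
open MeasureTheory Set Real

private lemma my_integrable_comp_abs {f : ℝ → ℝ} (hf : IntegrableOn f (Ioi (0:ℝ))) :
    Integrable fun x : ℝ => f |x| := by
  have hIoi : IntegrableOn (fun x : ℝ => f |x|) (Ioi 0) := by
    refine hf.congr_fun (fun x hx => ?_) measurableSet_Ioi
    rw [abs_of_pos hx]
  have hIic : IntegrableOn (fun x : ℝ => f |x|) (Iic 0) := by
    rw [← Measure.map_neg_eq_self (volume : Measure ℝ)]
    have m : MeasurableEmbedding fun x : ℝ => -x := (Homeomorph.neg ℝ).measurableEmbedding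
    rw [m.integrableOn_map_iff]
    simp_rw [Function.comp_def, abs_neg, neg_preimage, neg_Iic, neg_zero]
    exact Iff.mpr integrableOn_Ici_iff_integrableOn_Ioi hIoi
  have := hIic.union hIoi
  rwa [Iic_union_Ioi, integrableOn_univ] at this

private lemma two_term {a : ℝ} (ha : 0 ≤ a) (ha1 : a ≤ 1) {u v : ℝ} (hu : 0 ≤ u) (hv : 0 ≤ v) :
    (u + v) ^ a ≤ u ^ a + v ^ a := by
  have h := NNReal.rpow_add_le_add_rpow (u.toNNReal) (v.toNNReal) ha ha1
  have := NNReal.coe_le_coe.mpr h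
  push_cast at this
  rwa [Real.coe_toNNReal u hu, Real.coe_toNNReal v hv] at this

private lemma tri {a : ℝ} (ha : 0 ≤ a) (x y z : ℝ) :
    |x + y + z| ^ a ≤ 3 ^ max (a - 1) 0 * (|x| ^ a + |y| ^ a + |z| ^ a) := by
  have h1 : |x + y + z| ^ a ≤ (|x| + |y| + |z|) ^ a :=
    Real.rpow_le_rpow (abs_nonneg _) (abs_add_three x y z) ha
  rcases le_total a 1 with h | h
  · rw [max_eq_right (by linarith), Real.rpow_zero, one_mul]
    refine h1.trans ?_
    calc (|x| + |y| + |z|) ^ a ≤ (|x| + |y|) ^ a + |z| ^ a :=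
          two_term ha h (by positivity) (abs_nonneg _)
      _ ≤ |x| ^ a + |y| ^ a + |z| ^ a := by
          have := two_term ha h (abs_nonneg x) (abs_nonneg y); linarith
  · rw [max_eq_left (by linarith)]
    refine h1.trans ?_
    have key := Real.rpow_arith_mean_le_arith_mean_rpow (Finset.univ : Finset (Fin 3))
      (fun _ => (3:ℝ)⁻¹) (fun i => ![|x|, |y|, |z|] i)
      (fun _ _ => by norm_num) (by simp)
      (fun i _ => by fin_cases i <;> simp [abs_nonneg]) h
    simp only [Fin.sum_univ_three] at key
    have h3 : (|x| + |y| + |z|) ^ a = 3 ^ a * ((3:ℝ)⁻¹ * (|x| + |y| + |z|)) ^ a := by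
      rw [Real.mul_rpow (by norm_num) (by positivity), Real.inv_rpow (by norm_num),
        ← mul_assoc, mul_inv_cancel₀ (by positivity), one_mul]
    have hm : ![|x|, |y|, |z|] 0 = |x| ∧ ![|x|, |y|, |z|] 1 = |y| ∧ ![|x|, |y|, |z|] 2 = |z| := by
      simp
    rw [hm.1, hm.2.1, hm.2.2] at key
    calc (|x| + |y| + |z|) ^ a = 3 ^ a * ((3:ℝ)⁻¹ * (|x| + |y| + |z|)) ^ a := h3
      _ ≤ 3 ^ a * ((3:ℝ)⁻¹ * |x| ^ a + (3:ℝ)⁻¹ * |y| ^ a + (3:ℝ)⁻¹ * |z| ^ a) := by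
          refine mul_le_mul_of_nonneg_left ?_ (by positivity)
          convert key using 2; exacts [rfl, by ring]
      _ = 3 ^ (a - 1) * (|x| ^ a + |y| ^ a + |z| ^ a) := by
          rw [Real.rpow_sub (by norm_num), Real.rpow_one]; ring

example (ι : ℝ) (hι : 0 < ι) :
    ∀ z : ℝ, -z ^ 2 / (2 * ι) = -((2 * ι)⁻¹) * z ^ 2 := by
  intro z; field_simp

private lemma gauss_norm (ι : ℝ) (hι : 0 < ι) :
    ∫ z : ℝ, (2 * π * ι) ^ (-(1:ℝ) / 2) * Real.exp (-z ^ 2 / (2 * ι)) = 1 := by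
  have hexp : ∀ z : ℝ, -z ^ 2 / (2 * ι) = -((2 * ι)⁻¹) * z ^ 2 := fun z => by field_simp
  simp_rw [hexp]
  rw [integral_const_mul, integral_gaussian]
  have h1 : π / (2 * ι)⁻¹ = 2 * π * ι := by field_simp
  rw [h1, Real.sqrt_eq_rpow, ← Real.rpow_add (by positivity)]
  norm_num

private lemma rpow_calc (ι a : ℝ) (hι : 0 < ι) :
    (2 * π * ι) ^ (-(1:ℝ) / 2) * ((2 * ι)⁻¹ : ℝ) ^ (-(a + 1) / 2) =
      2 ^ (a / 2) * ι ^ (a / 2) / Real.sqrt π := by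
  have h2ι : (0:ℝ) < 2 * ι := by linarith
  rw [Real.inv_rpow h2ι.le, ← Real.rpow_neg h2ι.le, show -(-(a+1)/2) = (a+1)/2 by ring]
  have h1 : (2 * π * ι : ℝ) = π * (2 * ι) := by ring
  rw [h1, Real.mul_rpow pi_pos.le h2ι.le, mul_assoc,
    ← Real.rpow_add h2ι, Real.sqrt_eq_rpow]
  have h2 : -(1:ℝ) / 2 + (a + 1) / 2 = a / 2 := by ring
  rw [h2, Real.mul_rpow (by norm_num) hι.le,
    show (-1:ℝ)/2 = -(1/2) by ring, Real.rpow_neg pi_pos.le, div_eq_mul_inv]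
  ring

private lemma my_integrable_comp_abs' {f : ℝ → ℝ} (hf : IntegrableOn f (Ioi (0:ℝ))) :
    Integrable fun x : ℝ => f |x| := by
  have hIoi : IntegrableOn (fun x : ℝ => f |x|) (Ioi 0) := by
    refine hf.congr_fun (fun x hx => ?_) measurableSet_Ioi
    rw [abs_of_pos hx]
  have hIic : IntegrableOn (fun x : ℝ => f |x|) (Iic 0) := by
    rw [← Measure.map_neg_eq_self (volume : Measure ℝ)]
    have m : MeasurableEmbedding fun x : ℝ => -x := (Homeomorph.neg ℝ).measurableEmbedding
    rw [m.integrableOn_map_iff]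
    simp_rw [Function.comp_def, abs_neg, neg_preimage, neg_Iic, neg_zero]
    exact Iff.mpr integrableOn_Ici_iff_integrableOn_Ioi hIoi
  have := hIic.union hIoi
  rwa [Iic_union_Ioi, integrableOn_univ] at this

private lemma gauss_int (ι : ℝ) (hι : 0 < ι) :
    Integrable fun z : ℝ => (2 * π * ι) ^ (-(1:ℝ) / 2) * Real.exp (-z ^ 2 / (2 * ι)) := by
  have hexp : ∀ z : ℝ, -z ^ 2 / (2 * ι) = -((2 * ι)⁻¹) * z ^ 2 := fun z => by field_simp
  simp_rw [hexp]
  exact (integrable_exp_neg_mul_sq (by positivity)).const_mul _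

private lemma gauss_mom_int (ι a : ℝ) (hι : 0 < ι) (ha : 0 ≤ a) :
    Integrable fun z : ℝ =>
      |z| ^ a * ((2 * π * ι) ^ (-(1:ℝ) / 2) * Real.exp (-z ^ 2 / (2 * ι))) := by
  have hexp : ∀ z : ℝ, -z ^ 2 / (2 * ι) = -((2 * ι)⁻¹) * z ^ 2 := fun z => by field_simp
  have h := my_integrable_comp_abs' (f := fun x => x ^ a * Real.exp (-(2 * ι)⁻¹ * x ^ 2))
    (integrableOn_rpow_mul_exp_neg_mul_sq (by positivity) (by linarith))
  refine (h.const_mul ((2 * π * ι) ^ (-(1:ℝ) / 2))).congr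
    (Filter.Eventually.of_forall fun z => ?_)
  simp only []
  rw [sq_abs, hexp z]; ring

private lemma gauss_mom (ι a : ℝ) (hι : 0 < ι) (ha : 0 ≤ a) :
    ∫ z : ℝ, |z| ^ a * ((2 * π * ι) ^ (-(1:ℝ) / 2) * Real.exp (-z ^ 2 / (2 * ι))) =
      2 ^ (a / 2) * Real.Gamma ((1 + a) / 2) * ι ^ (a / 2) / Real.sqrt π := by
  have hexp : ∀ z : ℝ, -z ^ 2 / (2 * ι) = -((2 * ι)⁻¹) * z ^ 2 := fun z => by field_simp
  have step1 : (∫ z : ℝ, |z| ^ a * ((2 * π * ι) ^ (-(1:ℝ) / 2) * Real.exp (-z ^ 2 / (2 * ι)))) =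
      (2 * π * ι) ^ (-(1:ℝ) / 2) *
        ∫ z : ℝ, |z| ^ a * Real.exp (-(2 * ι)⁻¹ * |z| ^ 2) := by
    rw [← integral_const_mul]
    congr 1; ext z
    rw [sq_abs, hexp z]; ring
  have h3 : ∫ x in Ioi (0:ℝ), x ^ a * Real.exp (-(2 * ι)⁻¹ * x ^ 2) =
      ((2 * ι)⁻¹ : ℝ) ^ (-(a + 1) / 2) * (1 / 2) * Real.Gamma ((a + 1) / 2) := by
    simp_rw [← Real.rpow_two]
    exact integral_rpow_mul_exp_neg_mul_rpow two_pos (by linarith) (by positivity)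
  rw [step1,
    integral_comp_abs (f := fun x : ℝ => x ^ a * Real.exp (-(2 * ι)⁻¹ * x ^ 2)), h3]
  have hc := rpow_calc ι a hι
  have hG : 2 ^ (a / 2) * Real.Gamma ((1 + a) / 2) * ι ^ (a / 2) / Real.sqrt π =
      (2 ^ (a / 2) * ι ^ (a / 2) / Real.sqrt π) * Real.Gamma ((a + 1) / 2) := by
    rw [show (1 + a) / 2 = (a + 1) / 2 by ring]; ring
  rw [hG, ← hc]; ring

open MeasureTheory

/-- Core upper estimate (equation (Theorem 4.1-2)) in the proof of Theorem 4.1: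
upper bound for the Ornstein–Uhlenbeck-type average appearing in the
Nourdin–Viens function. -/
theorem stmt_16 (ι m a C₁ x₀ : ℝ) (hι : 0 < ι) (ha : 0 ≤ a) (hC₁ : 0 < C₁)
    (φ : ℝ → ℝ) (hmeas : Measurable φ)
    (hbound : ∀ x : ℝ, 0 ≤ φ x ∧ φ x ≤ C₁ * (1 + |x| ^ a)) :
    (∫ θ in Set.Ioi (0:ℝ), Real.exp (-θ) *
        ∫ z : ℝ,
          φ ((1 - Real.exp (-θ)) * m + Real.exp (-θ) * x₀ +
              Real.sqrt (1 - Real.exp (-2 * θ)) * z) *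
            ((2 * Real.pi * ι) ^ (-(1:ℝ) / 2) * Real.exp (-z ^ 2 / (2 * ι)))) ≤
      C₁ * (1 + 3 ^ max (a - 1) 0 * |m| ^ a + 3 ^ max (a - 1) 0 / (1 + a) * |x₀| ^ a +
        3 ^ max (a - 1) 0 * 2 ^ (a / 2) * Real.Gamma ((1 + a) / 2) * ι ^ (a / 2) /
          Real.sqrt Real.pi) := by
  have hc0 : (0:ℝ) ≤ 3 ^ max (a - 1) 0 := Real.rpow_nonneg (by norm_num) _
  set c : ℝ := 3 ^ max (a - 1) 0 with hc
  set M : ℝ := 2 ^ (a / 2) * Real.Gamma ((1 + a) / 2) * ι ^ (a / 2) / Real.sqrt Real.pi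
    with hM
  have hG0 : ∀ z : ℝ, 0 ≤ (2 * Real.pi * ι) ^ (-(1:ℝ) / 2) * Real.exp (-z ^ 2 / (2 * ι)) :=
    fun z => mul_nonneg (Real.rpow_nonneg (by positivity) _) (Real.exp_pos _).le
  have hG1 := gauss_norm ι hι
  have hGM := gauss_mom ι a hι ha
  have hGint := gauss_int ι hι
  have hGMint := gauss_mom_int ι a hι ha
  have hM0 : 0 ≤ M := by
    rw [hM, ← hGM]
    exact integral_nonneg fun z =>
      mul_nonneg (Real.rpow_nonneg (abs_nonneg _) _) (hG0 z)
  -- inner bound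
  have inner : ∀ θ : ℝ, 0 < θ →
      (∫ z : ℝ,
          φ ((1 - Real.exp (-θ)) * m + Real.exp (-θ) * x₀ +
              Real.sqrt (1 - Real.exp (-2 * θ)) * z) *
            ((2 * Real.pi * ι) ^ (-(1:ℝ) / 2) * Real.exp (-z ^ 2 / (2 * ι)))) ≤
        C₁ * (1 + c * |m| ^ a + c * M) + (C₁ * c * |x₀| ^ a) * Real.exp (-θ) ^ a := by
    intro θ hθ
    have he0 : 0 < Real.exp (-θ) := Real.exp_pos _
    have he1 : Real.exp (-θ) ≤ 1 := by
      rw [show (1:ℝ) = Real.exp 0 by simp]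
      exact Real.exp_le_exp.mpr (by linarith)
    have hs0 : 0 ≤ Real.sqrt (1 - Real.exp (-2 * θ)) := Real.sqrt_nonneg _
    have hs1 : Real.sqrt (1 - Real.exp (-2 * θ)) ≤ 1 :=
      Real.sqrt_le_one.mpr (by linarith [Real.exp_pos (-2 * θ)])
    have hA : C₁ * (1 + c * |m| ^ a + c * M) + (C₁ * c * |x₀| ^ a) * Real.exp (-θ) ^ a =
        (C₁ * (1 + c * (|m| ^ a + Real.exp (-θ) ^ a * |x₀| ^ a))) * 1 + (C₁ * c) * M := by
      ring
    have key : (∫ z : ℝ,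
          φ ((1 - Real.exp (-θ)) * m + Real.exp (-θ) * x₀ +
              Real.sqrt (1 - Real.exp (-2 * θ)) * z) *
            ((2 * Real.pi * ι) ^ (-(1:ℝ) / 2) * Real.exp (-z ^ 2 / (2 * ι)))) ≤
        ∫ z : ℝ, (C₁ * (1 + c * (|m| ^ a + Real.exp (-θ) ^ a * |x₀| ^ a)) *
            ((2 * Real.pi * ι) ^ (-(1:ℝ) / 2) * Real.exp (-z ^ 2 / (2 * ι))) +
          C₁ * c * (|z| ^ a *
            ((2 * Real.pi * ι) ^ (-(1:ℝ) / 2) * Real.exp (-z ^ 2 / (2 * ι))))) := by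
      refine integral_mono_of_nonneg
        (Filter.Eventually.of_forall fun z => mul_nonneg (hbound _).1 (hG0 z))
        (((hGint.const_mul _).add (hGMint.const_mul (C₁ * c))))
        (Filter.Eventually.of_forall fun z => ?_)
      simp only []
      set L : ℝ := (1 - Real.exp (-θ)) * m + Real.exp (-θ) * x₀ +
          Real.sqrt (1 - Real.exp (-2 * θ)) * z with hL
      have hLa : |L| ^ a ≤ c * (|m| ^ a + Real.exp (-θ) ^ a * |x₀| ^ a + |z| ^ a) := by
        refine (tri ha _ _ _).trans ?_
        refine mul_le_mul_of_nonneg_left ?_ hc0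
        have hA1 : |(1 - Real.exp (-θ)) * m| ^ a ≤ |m| ^ a := by
          rw [abs_mul, Real.mul_rpow (abs_nonneg _) (abs_nonneg _)]
          refine mul_le_of_le_one_left (Real.rpow_nonneg (abs_nonneg _) _) ?_
          exact Real.rpow_le_one (abs_nonneg _)
            (by rw [abs_of_nonneg (by linarith)]; linarith) ha
        have hA2 : |Real.exp (-θ) * x₀| ^ a = Real.exp (-θ) ^ a * |x₀| ^ a := by
          rw [abs_mul, abs_of_pos he0, Real.mul_rpow he0.le (abs_nonneg _)]
        have hA3 : |Real.sqrt (1 - Real.exp (-2 * θ)) * z| ^ a ≤ |z| ^ a := by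
          rw [abs_mul, abs_of_nonneg hs0, Real.mul_rpow hs0 (abs_nonneg _)]
          refine mul_le_of_le_one_left (Real.rpow_nonneg (abs_nonneg _) _) ?_
          exact Real.rpow_le_one hs0 hs1 ha
        linarith
      have h1 : φ L ≤ C₁ * (1 + c * (|m| ^ a + Real.exp (-θ) ^ a * |x₀| ^ a + |z| ^ a)) := by
        refine (hbound L).2.trans ?_
        have := mul_le_mul_of_nonneg_left hLa hC₁.le
        nlinarith
      calc φ L * ((2 * Real.pi * ι) ^ (-(1:ℝ) / 2) * Real.exp (-z ^ 2 / (2 * ι)))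
          ≤ C₁ * (1 + c * (|m| ^ a + Real.exp (-θ) ^ a * |x₀| ^ a + |z| ^ a)) *
              ((2 * Real.pi * ι) ^ (-(1:ℝ) / 2) * Real.exp (-z ^ 2 / (2 * ι))) :=
              mul_le_mul_of_nonneg_right h1 (hG0 z)
          _ = C₁ * (1 + c * (|m| ^ a + Real.exp (-θ) ^ a * |x₀| ^ a)) *
                ((2 * Real.pi * ι) ^ (-(1:ℝ) / 2) * Real.exp (-z ^ 2 / (2 * ι))) +
              C₁ * c * (|z| ^ a *
                ((2 * Real.pi * ι) ^ (-(1:ℝ) / 2) * Real.exp (-z ^ 2 / (2 * ι)))) := by ring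
    have comp : (∫ z : ℝ, (C₁ * (1 + c * (|m| ^ a + Real.exp (-θ) ^ a * |x₀| ^ a)) *
            ((2 * Real.pi * ι) ^ (-(1:ℝ) / 2) * Real.exp (-z ^ 2 / (2 * ι))) +
          C₁ * c * (|z| ^ a *
            ((2 * Real.pi * ι) ^ (-(1:ℝ) / 2) * Real.exp (-z ^ 2 / (2 * ι)))))) =
        C₁ * (1 + c * (|m| ^ a + Real.exp (-θ) ^ a * |x₀| ^ a)) * 1 + C₁ * c * M := by
      rw [integral_add (hGint.const_mul _) (hGMint.const_mul (C₁ * c)),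
        integral_const_mul, hG1, integral_const_mul, hGM, hM]
    rw [hA]
    exact key.trans (le_of_eq comp)
  -- outer estimate
  have i1 : IntegrableOn (fun θ : ℝ => Real.exp (-θ)) (Set.Ioi 0) := by
    simpa using exp_neg_integrableOn_Ioi 0 one_pos
  have i2 : IntegrableOn (fun θ : ℝ => Real.exp (-(1 + a) * θ)) (Set.Ioi 0) :=
    exp_neg_integrableOn_Ioi 0 (by linarith)
  have hia : (0:ℝ) < 1 + a := by linarith
  have outer : (∫ θ in Set.Ioi (0:ℝ), Real.exp (-θ) *
        ∫ z : ℝ,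
          φ ((1 - Real.exp (-θ)) * m + Real.exp (-θ) * x₀ +
              Real.sqrt (1 - Real.exp (-2 * θ)) * z) *
            ((2 * Real.pi * ι) ^ (-(1:ℝ) / 2) * Real.exp (-z ^ 2 / (2 * ι)))) ≤
      ∫ θ in Set.Ioi (0:ℝ), (C₁ * (1 + c * |m| ^ a + c * M) * Real.exp (-θ) +
          (C₁ * c * |x₀| ^ a) * Real.exp (-(1 + a) * θ)) := by
    refine integral_mono_of_nonneg ?_ ((i1.const_mul _).add (i2.const_mul _)) ?_
    · filter_upwards [ae_restrict_mem measurableSet_Ioi] with θ hθ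
      exact mul_nonneg (Real.exp_pos _).le
        (integral_nonneg fun z => mul_nonneg (hbound _).1 (hG0 z))
    · filter_upwards [ae_restrict_mem measurableSet_Ioi] with θ hθ
      have h2 : Real.exp (-θ) * Real.exp (-θ) ^ a = Real.exp (-(1 + a) * θ) := by
        rw [Real.rpow_def_of_pos (Real.exp_pos _), Real.log_exp, ← Real.exp_add]
        congr 1; ring
      calc Real.exp (-θ) * _ ≤ Real.exp (-θ) *
            (C₁ * (1 + c * |m| ^ a + c * M) + (C₁ * c * |x₀| ^ a) * Real.exp (-θ) ^ a) :=
          mul_le_mul_of_nonneg_left (inner θ hθ) (Real.exp_pos _).le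
        _ = C₁ * (1 + c * |m| ^ a + c * M) * Real.exp (-θ) +
            (C₁ * c * |x₀| ^ a) * (Real.exp (-θ) * Real.exp (-θ) ^ a) := by ring
        _ = _ := by rw [h2]
  refine outer.trans ?_
  have hint2 : ∫ θ in Set.Ioi (0:ℝ), Real.exp (-(1 + a) * θ) = (1 + a)⁻¹ := by
    have h := integral_comp_mul_left_Ioi (fun x => Real.exp (-x)) 0 hia
    simp only [mul_zero] at h
    simp_rw [neg_mul]
    rw [h, integral_exp_neg_Ioi_zero, smul_eq_mul, mul_one]
  rw [integral_add (i1.const_mul _) (i2.const_mul _), integral_const_mul, integral_const_mul,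
    integral_exp_neg_Ioi_zero, hint2, hM]
  rw [hc]
  apply le_of_eq
  field_simp
  ring
end
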